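/- If X ⊆ ℝ is an A₃-set, then no Borel image of X into Baire space is a dominating family. -/

import Mathlib

open Set Filter

def A3Set (X : Set ℝ) : Prop :=
  ∀ U : ℕ → Set (Set ℝ),
    (∀ n, (U n).Countable) →
    (∀ n, IsChain (· ⊆ ·) (U n)) →
    (∀ n, ∀ B ∈ U n, MeasurableSet B) →
    (∀ n, X ⊆ ⋃₀ U n) →
    ∃ Y : ℕ → Set ℝ, (∀ n, Y n ∈ U n) ∧ X ⊆ ⋃ n, Y n

def Dominating (D : Set (ℕ → ℕ)) : Prop :=
  ∀ f : ℕ → ℕ, ∃ g ∈ D, ∀ᶠ n in atTop, f n ≤ g n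

theorem stmt13 (X : Set ℝ) (h : A3Set X) :
    ∀ Ψ : X → (ℕ → ℕ), Measurable Ψ → ¬ Dominating (Set.range Ψ) := by
  intro Ψ hΨ hD
  -- Borel sets coding {x ∈ X | Ψ x n ≤ k}
  have hex : ∀ n k : ℕ, ∃ B : Set ℝ, MeasurableSet B ∧
      (Subtype.val ⁻¹' B : Set X) = {x : X | Ψ x n ≤ k} := by
    intro n k
    have hmeas : MeasurableSet {x : X | Ψ x n ≤ k} := by
      have h1 := (measurable_pi_apply (a := n) (X := fun _ : ℕ => ℕ))
      exact hΨ (h1 (MeasurableSet.of_discrete (s := {j : ℕ | j ≤ k})))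
    exact MeasurableSpace.measurableSet_comap.mp hmeas
  choose B hBm hBp using hex
  -- monotone versions
  set B' : ℕ → ℕ → Set ℝ := fun n k => ⋃ j ∈ Finset.range (k + 1), B n j with hB'
  have hB'm : ∀ n k, MeasurableSet (B' n k) := fun n k =>
    MeasurableSet.biUnion (Finset.range (k + 1)).countable_toSet (fun j _ => hBm n j)
  have hB'mono : ∀ n, Monotone (B' n) := by
    intro n k₁ k₂ hk x hx
    simp only [hB', Set.mem_iUnion, Finset.mem_range] at hx ⊢
    obtain ⟨j, hj, hx⟩ := hx
    exact ⟨j, by omega, hx⟩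
  have hmemB' : ∀ (n k : ℕ) (x : X), (x : ℝ) ∈ B' n k ↔ ∃ j ≤ k, Ψ x n ≤ j := by
    intro n k x
    simp only [hB', Set.mem_iUnion, Finset.mem_range]
    constructor
    · rintro ⟨j, hj, hx⟩
      have : x ∈ (Subtype.val ⁻¹' B n j : Set X) := hx
      rw [hBp] at this
      exact ⟨j, by omega, this⟩
    · rintro ⟨j, hj, hx⟩
      refine ⟨j, by omega, ?_⟩
      have : x ∈ (Subtype.val ⁻¹' B n j : Set X) := by rw [hBp]; exact hx
      exact this
  -- the chains
  set U : ℕ → Set (Set ℝ) := fun n => Set.range (B' n) with hU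
  have hUc : ∀ n, (U n).Countable := fun n => Set.countable_range _
  have hUchain : ∀ n, IsChain (· ⊆ ·) (U n) := by
    intro n A hA C hC hne
    obtain ⟨k₁, rfl⟩ := hA
    obtain ⟨k₂, rfl⟩ := hC
    rcases le_total k₁ k₂ with hk | hk
    · exact Or.inl (hB'mono n hk)
    · exact Or.inr (hB'mono n hk)
  have hUmeas : ∀ n, ∀ A ∈ U n, MeasurableSet A := by
    rintro n A ⟨k, rfl⟩; exact hB'm n k
  have hUcov : ∀ n, X ⊆ ⋃₀ U n := by
    intro n x hx
    refine ⟨B' n (Ψ ⟨x, hx⟩ n), ⟨_, rfl⟩, ?_⟩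
    exact (hmemB' n _ ⟨x, hx⟩).mpr ⟨_, le_refl _, le_refl _⟩
  -- apply A3 for each tail shift N
  have key : ∀ N : ℕ, ∃ κ : ℕ → ℕ, ∀ x : X, ∃ n, Ψ x (n + N) ≤ κ n := by
    intro N
    obtain ⟨Y, hYmem, hYcov⟩ := h (fun n => U (n + N))
      (fun n => hUc _) (fun n => hUchain _) (fun n => hUmeas _) (fun n => hUcov _)
    choose κ hκ using hYmem
    refine ⟨κ, fun x => ?_⟩
    obtain ⟨n, hxY⟩ := mem_iUnion.mp (hYcov x.2)
    rw [← hκ n] at hxY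
    obtain ⟨j, hj, hx⟩ := (hmemB' _ _ x).mp hxY
    exact ⟨n, le_trans hx hj⟩
  choose κ hκ using key
  -- diagonal function
  obtain ⟨g, ⟨x, rfl⟩, hev⟩ :=
    hD (fun m => 1 + (Finset.range (m + 1)).sup (fun i => κ i (m - i)))
  obtain ⟨N, hN⟩ := eventually_atTop.mp hev
  obtain ⟨n, hn⟩ := hκ N x
  have hm : 1 + (Finset.range (n + N + 1)).sup (fun i => κ i (n + N - i)) ≤ Ψ x (n + N) :=
    hN _ (by omega)
  have hsup : κ N (n + N - N) ≤ (Finset.range (n + N + 1)).sup (fun i => κ i (n + N - i)) :=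
    Finset.le_sup (f := fun i => κ i (n + N - i)) (Finset.mem_range.mpr (by omega))
  rw [Nat.add_sub_cancel] at hsup
  omega
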